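/- Let F_β(x) = x^β on [0,1] for β > 0, and let 0 ≤ h ≤ 1/2. If 0 < β ≤ 2, then ω₂(F_β; h) = |2^β − 2|·h^β. If β > 2, then ω₂(F_β; h) ≤ β(β−1)·h². -/

import Mathlib

open Set Finset

private lemma cont_rpow_const {β : ℝ} (hβ : 0 ≤ β) : Continuous fun u : ℝ => u ^ β :=
  continuous_iff_continuousAt.2 fun x => Real.continuousAt_rpow_const x β (Or.inr hβ)

private lemma hasDerivAt_shift {β : ℝ} (c x : ℝ) (hx : x + c ≠ 0) :
    HasDerivAt (fun y : ℝ => (y + c) ^ β) (β * (x + c) ^ (β - 1)) x := by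
  have h := (Real.hasDerivAt_rpow_const (x := x + c) (p := β) (Or.inl hx)).comp x
    ((hasDerivAt_id x).add_const c)
  rw [mul_one] at h
  exact h

private lemma hasDerivAt_shift_neg {β : ℝ} (c x : ℝ) (hx : c - x ≠ 0) :
    HasDerivAt (fun y : ℝ => (c - y) ^ β) (-(β * (c - x) ^ (β - 1))) x := by
  have inner : HasDerivAt (fun y : ℝ => c - y) (-1) x := by
    have := (hasDerivAt_const x c).sub (hasDerivAt_id x); simp only [zero_sub] at this; exact this
  have h := (Real.hasDerivAt_rpow_const (x := c - x) (p := β) (Or.inl hx)).comp x inner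
  have h' : HasDerivAt (fun y : ℝ => (c - y) ^ β) (β * (c - x) ^ (β - 1) * (-1)) x := by
    exact h
  convert h' using 1
  ring

private lemma midpoint_concave' {p : ℝ} (hp0 : 0 ≤ p) (hp1 : p ≤ 1) {a b : ℝ}
    (ha : 0 ≤ a) (hb : 0 ≤ b) : a ^ p + b ^ p ≤ 2 * ((a + b) / 2) ^ p := by
  have h := (Real.concaveOn_rpow hp0 hp1).2 (Set.mem_Ici.2 ha) (Set.mem_Ici.2 hb)
    (by norm_num : (0:ℝ) ≤ 1/2) (by norm_num : (0:ℝ) ≤ 1/2) (by norm_num)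
  simp only [smul_eq_mul] at h
  have e : (1:ℝ)/2 * a + 1/2 * b = (a + b) / 2 := by ring
  rw [e] at h
  linarith

private lemma midpoint_convex_ge_one {p : ℝ} (hp : 1 ≤ p) {a b : ℝ}
    (ha : 0 ≤ a) (hb : 0 ≤ b) : 2 * ((a + b) / 2) ^ p ≤ a ^ p + b ^ p := by
  have h := (convexOn_rpow hp).2 (Set.mem_Ici.2 ha) (Set.mem_Ici.2 hb)
    (by norm_num : (0:ℝ) ≤ 1/2) (by norm_num : (0:ℝ) ≤ 1/2) (by norm_num)
  simp only [smul_eq_mul] at h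
  have e : (1:ℝ)/2 * a + 1/2 * b = (a + b) / 2 := by ring
  rw [e] at h
  linarith

private lemma midpoint_convex_neg {p : ℝ} (hp : p ≤ 0) {a b : ℝ}
    (ha : 0 < a) (hb : 0 < b) : 2 * ((a + b) / 2) ^ p ≤ a ^ p + b ^ p := by
  set m : ℝ := (a + b) / 2 with hm
  have hmpos : 0 < m := by positivity
  have hab : a * b ≤ m ^ (2:ℝ) := by
    rw [show ((2:ℝ)) = ((2:ℕ):ℝ) by norm_num, Real.rpow_natCast]
    nlinarith [sq_nonneg (a - b)]
  have h1 : m ^ p = (m ^ (2:ℝ)) ^ (p / 2) := by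
    rw [← Real.rpow_mul hmpos.le]; congr 1; ring
  have h2 : (m ^ (2:ℝ)) ^ (p/2) ≤ (a * b) ^ (p/2) :=
    Real.rpow_le_rpow_of_nonpos (by positivity) hab (by linarith)
  have h3 : (a * b) ^ (p/2) = Real.sqrt (a ^ p * b ^ p) := by
    rw [← Real.mul_rpow ha.le hb.le, Real.sqrt_eq_rpow, ← Real.rpow_mul (by positivity)]
    ring_nf
  have h4 : 2 * Real.sqrt (a ^ p * b ^ p) ≤ a ^ p + b ^ p := by
    have hap : 0 ≤ a ^ p := Real.rpow_nonneg ha.le p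
    have hbp : 0 ≤ b ^ p := Real.rpow_nonneg hb.le p
    rw [Real.sqrt_mul hap]
    nlinarith [sq_nonneg (Real.sqrt (a ^ p) - Real.sqrt (b ^ p)), Real.sq_sqrt hap,
      Real.sq_sqrt hbp, Real.sqrt_nonneg (a ^ p), Real.sqrt_nonneg (b ^ p)]
  calc 2 * m ^ p = 2 * (a*b) ^ (p/2) + 2 * ((m ^ (2:ℝ)) ^ (p/2) - (a*b)^(p/2)) := by
        rw [h1]; ring
    _ ≤ 2 * Real.sqrt (a ^ p * b ^ p) + 0 := by rw [h3]; nlinarith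
    _ ≤ a ^ p + b ^ p := by linarith

private lemma antitoneA {β t : ℝ} (hβ1 : 1 ≤ β) (hβ2 : β ≤ 2) (ht : 0 < t) :
    AntitoneOn (fun x : ℝ => (x + t) ^ β + (x - t) ^ β - 2 * x ^ β) (Set.Icc t 1) := by
  have hβ0 : (0:ℝ) ≤ β := by linarith
  have hd : ∀ x ∈ Set.Ioo t (1:ℝ), HasDerivAt
      (fun x : ℝ => (x + t) ^ β + (x - t) ^ β - 2 * x ^ β)
      (β * (x + t) ^ (β - 1) + β * (x - t) ^ (β - 1) - 2 * (β * x ^ (β - 1))) x := by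
    intro x hx
    have hx0 : 0 < x := lt_trans ht hx.1
    have d1 : HasDerivAt (fun y : ℝ => (y + t) ^ β) (β * (x + t) ^ (β - 1)) x :=
      hasDerivAt_shift t x (by positivity)
    have d2 : HasDerivAt (fun y : ℝ => (y - t) ^ β) (β * (x - t) ^ (β - 1)) x := by
      simpa [sub_eq_add_neg] using hasDerivAt_shift (β := β) (-t) x
        (by simp [sub_eq_add_neg] at *; linarith [hx.1])
    have d3 : HasDerivAt (fun y : ℝ => y ^ β) (β * x ^ (β - 1)) x :=
      Real.hasDerivAt_rpow_const (Or.inl hx0.ne')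
    exact (d1.add d2).sub (d3.const_mul 2)
  apply antitoneOn_of_deriv_nonpos (convex_Icc t 1)
  · apply Continuous.continuousOn
    exact (((cont_rpow_const hβ0).comp (continuous_id.add continuous_const)).add
      ((cont_rpow_const hβ0).comp (continuous_id.sub continuous_const))).sub
      (continuous_const.mul (cont_rpow_const hβ0))
  · rw [interior_Icc]
    exact fun x hx => ((hd x hx).differentiableAt).differentiableWithinAt
  · rw [interior_Icc]
    intro x hx
    rw [(hd x hx).deriv]
    have hxt : 0 < x - t := by linarith [hx.1]
    have key : (x - t) ^ (β - 1) + (x + t) ^ (β - 1) ≤ 2 * x ^ (β - 1) := by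
      have := midpoint_concave' (by linarith : (0:ℝ) ≤ β - 1) (by linarith : β - 1 ≤ 1)
        hxt.le (by linarith : (0:ℝ) ≤ x + t)
      have e : ((x - t) + (x + t)) / 2 = x := by ring
      rwa [e] at this
    nlinarith [mul_le_mul_of_nonneg_left key hβ0]

private lemma antitoneB {β t : ℝ} (hβ0 : 0 < β) (hβ1 : β ≤ 1) (ht : 0 < t) :
    AntitoneOn (fun x : ℝ => 2 * x ^ β - (x + t) ^ β - (x - t) ^ β) (Set.Icc t 1) := by
  have hd : ∀ x ∈ Set.Ioo t (1:ℝ), HasDerivAt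
      (fun x : ℝ => 2 * x ^ β - (x + t) ^ β - (x - t) ^ β)
      (2 * (β * x ^ (β - 1)) - β * (x + t) ^ (β - 1) - β * (x - t) ^ (β - 1)) x := by
    intro x hx
    have hx0 : 0 < x := lt_trans ht hx.1
    have d1 : HasDerivAt (fun y : ℝ => (y + t) ^ β) (β * (x + t) ^ (β - 1)) x :=
      hasDerivAt_shift t x (by positivity)
    have d2 : HasDerivAt (fun y : ℝ => (y - t) ^ β) (β * (x - t) ^ (β - 1)) x := by
      simpa [sub_eq_add_neg] using hasDerivAt_shift (β := β) (-t) x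
        (by simp [sub_eq_add_neg] at *; linarith [hx.1])
    have d3 : HasDerivAt (fun y : ℝ => y ^ β) (β * x ^ (β - 1)) x :=
      Real.hasDerivAt_rpow_const (Or.inl hx0.ne')
    exact ((d3.const_mul 2).sub d1).sub d2
  apply antitoneOn_of_deriv_nonpos (convex_Icc t 1)
  · apply Continuous.continuousOn
    exact ((continuous_const.mul (cont_rpow_const hβ0.le)).sub
      ((cont_rpow_const hβ0.le).comp (continuous_id.add continuous_const))).sub
      ((cont_rpow_const hβ0.le).comp (continuous_id.sub continuous_const))
  · rw [interior_Icc]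
    exact fun x hx => ((hd x hx).differentiableAt).differentiableWithinAt
  · rw [interior_Icc]
    intro x hx
    rw [(hd x hx).deriv]
    have hxt : 0 < x - t := by linarith [hx.1]
    have key : 2 * x ^ (β - 1) ≤ (x - t) ^ (β - 1) + (x + t) ^ (β - 1) := by
      have := midpoint_convex_neg (by linarith : β - 1 ≤ 0) hxt
        (by linarith [hx.1, ht] : (0:ℝ) < x + t)
      have e : ((x - t) + (x + t)) / 2 = x := by ring
      rwa [e] at this
    nlinarith [mul_le_mul_of_nonneg_left key hβ0.le]

private lemma keyA {β t x : ℝ} (hβ1 : 1 ≤ β) (hβ2 : β ≤ 2) (ht : 0 ≤ t) (hxt : t ≤ x)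
    (hx1 : x + t ≤ 1) : (x + t) ^ β - 2 * x ^ β + (x - t) ^ β ≤ ((2:ℝ) ^ β - 2) * t ^ β := by
  rcases ht.eq_or_lt with rfl | ht'
  · simp [Real.zero_rpow (by positivity : β ≠ 0)]
    linarith
  · have hx1' : x ≤ 1 := by linarith
    have ht1 : t ≤ 1 := le_trans hxt hx1'
    have h := antitoneA hβ1 hβ2 ht' ⟨le_refl t, ht1⟩ ⟨hxt, hx1'⟩ hxt
    simp only at h
    have e1 : t + t = 2 * t := by ring
    have e2 : t - t = 0 := by ring
    rw [e1, e2, Real.mul_rpow (by norm_num) ht'.le,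
      Real.zero_rpow (by positivity : β ≠ 0)] at h
    linarith

private lemma keyB {β t x : ℝ} (hβ0 : 0 < β) (hβ1 : β ≤ 1) (ht : 0 ≤ t) (hxt : t ≤ x)
    (hx1 : x + t ≤ 1) : 2 * x ^ β - (x + t) ^ β - (x - t) ^ β ≤ (2 - (2:ℝ) ^ β) * t ^ β := by
  rcases ht.eq_or_lt with rfl | ht'
  · simp [Real.zero_rpow (by positivity : β ≠ 0)]
    linarith
  · have hx1' : x ≤ 1 := by linarith
    have ht1 : t ≤ 1 := le_trans hxt hx1'
    have h := antitoneB hβ0 hβ1 ht' ⟨le_refl t, ht1⟩ ⟨hxt, hx1'⟩ hxt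
    simp only at h
    have e1 : t + t = 2 * t := by ring
    have e2 : t - t = 0 := by ring
    rw [e1, e2, Real.mul_rpow (by norm_num) ht'.le,
      Real.zero_rpow (by positivity : β ≠ 0)] at h
    linarith

private lemma delta_nonneg {β t x : ℝ} (hβ1 : 1 ≤ β) (ht : 0 ≤ t) (hxt : t ≤ x) :
    0 ≤ (x + t) ^ β - 2 * x ^ β + (x - t) ^ β := by
  have h := midpoint_convex_ge_one hβ1 (by linarith : (0:ℝ) ≤ x - t)
    (by linarith : (0:ℝ) ≤ x + t)
  have e : ((x - t) + (x + t)) / 2 = x := by ring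
  rw [e] at h
  linarith

private lemma delta_nonpos {β t x : ℝ} (hβ0 : 0 ≤ β) (hβ1 : β ≤ 1) (ht : 0 ≤ t) (hxt : t ≤ x) :
    (x + t) ^ β - 2 * x ^ β + (x - t) ^ β ≤ 0 := by
  have h := midpoint_concave' hβ0 hβ1 (by linarith : (0:ℝ) ≤ x - t)
    (by linarith : (0:ℝ) ≤ x + t)
  have e : ((x - t) + (x + t)) / 2 = x := by ring
  rw [e] at h
  linarith

private lemma keyE {β t x : ℝ} (hβ : 2 < β) (ht : 0 ≤ t) (hxt : t ≤ x) (hx1 : x + t ≤ 1) :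
    (x + t) ^ β - 2 * x ^ β + (x - t) ^ β ≤ β * (β - 1) * t ^ 2 := by
  rcases ht.eq_or_lt with rfl | ht'
  · simp
    linarith
  have hx0 : 0 < x := lt_of_lt_of_le ht' hxt
  have hx1' : x ≤ 1 := by linarith
  -- Step 1: ψ s = 2(β-1)s - (x+s)^(β-1) + (x-s)^(β-1) is monotone on [0,t]
  have hψd : ∀ s ∈ Set.Ioo (0:ℝ) t, HasDerivAt
      (fun s : ℝ => 2 * (β - 1) * s - (x + s) ^ (β - 1) + (x - s) ^ (β - 1))
      (2 * (β - 1) - (β - 1) * (x + s) ^ (β - 1 - 1)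
        + -((β - 1) * (x - s) ^ (β - 1 - 1))) s := by
    intro s hs
    have hxs : 0 < x - s := by linarith [hs.2]
    have d0 : HasDerivAt (fun s : ℝ => 2 * (β - 1) * s) (2 * (β - 1)) s := by
      simpa using (hasDerivAt_id s).const_mul (2 * (β - 1))
    have d1 : HasDerivAt (fun s : ℝ => (x + s) ^ (β - 1)) ((β - 1) * (x + s) ^ (β - 1 - 1)) s := by
      simpa [add_comm] using hasDerivAt_shift (β := β - 1) x s
        (ne_of_gt (by linarith [hs.1] : (0:ℝ) < s + x))
    have d2 : HasDerivAt (fun s : ℝ => (x - s) ^ (β - 1))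
        (-((β - 1) * (x - s) ^ (β - 1 - 1))) s :=
      hasDerivAt_shift_neg x s hxs.ne'
    exact (d0.sub d1).add d2
  have hψ : MonotoneOn
      (fun s : ℝ => 2 * (β - 1) * s - (x + s) ^ (β - 1) + (x - s) ^ (β - 1))
      (Set.Icc 0 t) := by
    apply monotoneOn_of_deriv_nonneg (convex_Icc 0 t)
    · apply Continuous.continuousOn
      exact ((continuous_const.mul continuous_id).sub
        ((cont_rpow_const (by linarith)).comp (continuous_const.add continuous_id))).add
        ((cont_rpow_const (by linarith)).comp (continuous_const.sub continuous_id))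
    · rw [interior_Icc]
      exact fun s hs => ((hψd s hs).differentiableAt).differentiableWithinAt
    · rw [interior_Icc]
      intro s hs
      rw [(hψd s hs).deriv]
      have hxs : 0 < x - s := by linarith [hs.2]
      have b1 : (x + s) ^ (β - 1 - 1) ≤ 1 :=
        Real.rpow_le_one (by linarith [hs.1]) (by linarith [hs.2]) (by linarith)
      have b2 : (x - s) ^ (β - 1 - 1) ≤ 1 :=
        Real.rpow_le_one hxs.le (by linarith [hs.1]) (by linarith)
      nlinarith [mul_le_mul_of_nonneg_left b1 (by linarith : (0:ℝ) ≤ β - 1),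
        mul_le_mul_of_nonneg_left b2 (by linarith : (0:ℝ) ≤ β - 1)]
  have hE' : ∀ s ∈ Set.Icc (0:ℝ) t, (x + s) ^ (β - 1) - (x - s) ^ (β - 1) ≤ 2 * (β - 1) * s := by
    intro s hs
    have h := hψ ⟨le_refl 0, ht⟩ hs hs.1
    simp only at h
    simp only [add_zero, sub_zero, mul_zero] at h
    linarith
  -- Step 2: φ s = β(β-1)s² - ((x+s)^β - 2x^β + (x-s)^β) is monotone on [0,t]
  have hφd : ∀ s ∈ Set.Ioo (0:ℝ) t, HasDerivAt
      (fun s : ℝ => β * (β - 1) * s ^ 2 - ((x + s) ^ β - 2 * x ^ β + (x - s) ^ β))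
      (β * (β - 1) * (2 * s) - (β * (x + s) ^ (β - 1) - 0 + -(β * (x - s) ^ (β - 1)))) s := by
    intro s hs
    have hxs : 0 < x - s := by linarith [hs.2]
    have d0 : HasDerivAt (fun s : ℝ => β * (β - 1) * s ^ 2) (β * (β - 1) * (2 * s)) s := by
      have := (hasDerivAt_pow 2 s).const_mul (β * (β - 1))
      simpa using this
    have d1 : HasDerivAt (fun s : ℝ => (x + s) ^ β) (β * (x + s) ^ (β - 1)) s := by
      simpa [add_comm] using hasDerivAt_shift (β := β) x s
        (ne_of_gt (by linarith [hs.1] : (0:ℝ) < s + x))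
    have d2 : HasDerivAt (fun s : ℝ => (x - s) ^ β) (-(β * (x - s) ^ (β - 1))) s :=
      hasDerivAt_shift_neg x s hxs.ne'
    exact d0.sub ((d1.sub (hasDerivAt_const s (2 * x ^ β))).add d2)
  have hφ : MonotoneOn
      (fun s : ℝ => β * (β - 1) * s ^ 2 - ((x + s) ^ β - 2 * x ^ β + (x - s) ^ β))
      (Set.Icc 0 t) := by
    apply monotoneOn_of_deriv_nonneg (convex_Icc 0 t)
    · apply Continuous.continuousOn
      apply (continuous_const.mul (continuous_pow 2)).sub
      exact (((cont_rpow_const (by linarith)).comp (continuous_const.add continuous_id)).sub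
        continuous_const).add
        ((cont_rpow_const (by linarith)).comp (continuous_const.sub continuous_id))
    · rw [interior_Icc]
      exact fun s hs => ((hφd s hs).differentiableAt).differentiableWithinAt
    · rw [interior_Icc]
      intro s hs
      rw [(hφd s hs).deriv]
      have h := hE' s ⟨hs.1.le, hs.2.le⟩
      nlinarith [mul_le_mul_of_nonneg_left h (by linarith : (0:ℝ) ≤ β)]
  have h := hφ ⟨le_refl 0, ht'.le⟩ ⟨ht'.le, le_refl t⟩ ht'.le
  simp only [add_zero, sub_zero, ne_eq, OfNat.ofNat_ne_zero, not_false_eq_true,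
    zero_pow, mul_zero] at h
  linarith

/-- The second modulus of continuity of `f` on `[0,1]`. -/
noncomputable def omega2 (f : ℝ → ℝ) (δ : ℝ) : ℝ :=
  sSup {v | ∃ x h : ℝ, 0 ≤ h ∧ h ≤ δ ∧ x - h ∈ Set.Icc (0:ℝ) 1 ∧ x + h ∈ Set.Icc (0:ℝ) 1 ∧
    v = |f (x + h) - 2 * f x + f (x - h)|}

theorem second_modulus_of_power (β h : ℝ) (hβ : 0 < β) (hh0 : 0 ≤ h) (hh : h ≤ 1 / 2) :
    (β ≤ 2 → omega2 (fun x => x ^ β) h = |(2:ℝ) ^ β - 2| * h ^ β) ∧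
      (2 < β → omega2 (fun x => x ^ β) h ≤ β * (β - 1) * h ^ 2) := by
  constructor
  · intro hβ2
    unfold omega2
    apply IsGreatest.csSup_eq
    constructor
    · refine ⟨h, h, hh0, le_rfl, ?_, ?_, ?_⟩
      · simp
      · constructor <;> [linarith; linarith]
      · show |(2:ℝ) ^ β - 2| * h ^ β = |(h + h) ^ β - 2 * h ^ β + (h - h) ^ β|
        have e1 : h + h = 2 * h := by ring
        rw [e1, sub_self, Real.mul_rpow (by norm_num) hh0, Real.zero_rpow hβ.ne',
          show (2:ℝ) ^ β * h ^ β - 2 * h ^ β + 0 = ((2:ℝ) ^ β - 2) * h ^ β by ring,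
          abs_mul, abs_of_nonneg (Real.rpow_nonneg hh0 β)]
    · rintro v ⟨x, t, ht0, hth, hxm, hxp, rfl⟩
      obtain ⟨hm0, hm1⟩ := hxm
      obtain ⟨hp0, hp1⟩ := hxp
      have hxt : t ≤ x := by linarith
      have htβ : t ^ β ≤ h ^ β := Real.rpow_le_rpow ht0 hth hβ.le
      show |(x + t) ^ β - 2 * x ^ β + (x - t) ^ β| ≤ |(2:ℝ) ^ β - 2| * h ^ β
      rcases le_total β 1 with hc | hc
      · have h2b : (2:ℝ) ^ β ≤ 2 := by
          calc (2:ℝ) ^ β ≤ 2 ^ (1:ℝ) := Real.rpow_le_rpow_of_exponent_le one_le_two hc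
            _ = 2 := Real.rpow_one 2
        rw [abs_of_nonpos (delta_nonpos hβ.le hc ht0 hxt),
          abs_of_nonpos (by linarith : (2:ℝ) ^ β - 2 ≤ 0)]
        have hk := keyB hβ hc ht0 hxt hp1
        have hmono : (2 - (2:ℝ) ^ β) * t ^ β ≤ (2 - (2:ℝ) ^ β) * h ^ β :=
          mul_le_mul_of_nonneg_left htβ (by linarith)
        calc -((x + t) ^ β - 2 * x ^ β + (x - t) ^ β)
            = 2 * x ^ β - (x + t) ^ β - (x - t) ^ β := by ring
          _ ≤ (2 - (2:ℝ) ^ β) * t ^ β := hk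
          _ ≤ (2 - (2:ℝ) ^ β) * h ^ β := hmono
          _ = -((2:ℝ) ^ β - 2) * h ^ β := by ring
      · have h2b : (2:ℝ) ≤ 2 ^ β := by
          calc (2:ℝ) = 2 ^ (1:ℝ) := (Real.rpow_one 2).symm
            _ ≤ 2 ^ β := Real.rpow_le_rpow_of_exponent_le one_le_two hc
        rw [abs_of_nonneg (delta_nonneg hc ht0 hxt),
          abs_of_nonneg (by linarith : (0:ℝ) ≤ 2 ^ β - 2)]
        have hk := keyA hc hβ2 ht0 hxt hp1
        have hmono : ((2:ℝ) ^ β - 2) * t ^ β ≤ ((2:ℝ) ^ β - 2) * h ^ β :=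
          mul_le_mul_of_nonneg_left htβ (by linarith)
        linarith
  · intro hβ2
    unfold omega2
    apply Real.sSup_le
    · rintro v ⟨x, t, ht0, hth, hxm, hxp, rfl⟩
      obtain ⟨hm0, hm1⟩ := hxm
      obtain ⟨hp0, hp1⟩ := hxp
      have hxt : t ≤ x := by linarith
      show |(x + t) ^ β - 2 * x ^ β + (x - t) ^ β| ≤ β * (β - 1) * h ^ 2
      rw [abs_of_nonneg (delta_nonneg (by linarith) ht0 hxt)]
      have hk := keyE hβ2 ht0 hxt hp1
      have ht2 : t ^ 2 ≤ h ^ 2 := pow_le_pow_left₀ ht0 hth 2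
      have hββ : (0:ℝ) ≤ β * (β - 1) := by nlinarith
      have := mul_le_mul_of_nonneg_left ht2 hββ
      linarith
    · have h2 := sq_nonneg h
      have hββ : (0:ℝ) ≤ β * (β - 1) := by nlinarith
      positivity
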